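/- For every 1 ≤ p < ∞ there exists a constant C > 0 such that for all n ≥ 1 the ℓ_p-distortion of the level-n Hanoi Schreier graph Γ_n satisfies c_{(p)}(Γ_n) ≤ C. -/

import Mathlib

noncomputable section
open scoped ENNReal

/-- The generator `a_{(ij)}` of the Hanoi Towers group acting on finite ternary words:
`a_{(ij)}(iw) = jw`, `a_{(ij)}(jw) = iw`, and `a_{(ij)}(kw) = k·a_{(ij)}(w)` for
`k ∉ {i,j}`. -/
def hanoiMove (i j : Fin 3) : List (Fin 3) → List (Fin 3)
  | [] => []
  | x :: w => if x = i then j :: w else if x = j then i :: w else x :: hanoiMove i j w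

/-- The level-`n` Hanoi Schreier graph `Γ_n`: vertices are ternary words of length `n`, and
distinct `x, y` are adjacent iff `y ∈ {a(x), b(x), c(x)}` with `a = a_{(01)}`, `b = a_{(02)}`,
`c = a_{(12)}` (the relation is symmetrized; since the generators are involutions this is the
same relation). -/
def hanoiGraph (n : ℕ) : SimpleGraph (List.Vector (Fin 3) n) where
  Adj x y := x ≠ y ∧ ∃ s ∈ [hanoiMove 0 1, hanoiMove 0 2, hanoiMove 1 2],
    s x.toList = y.toList ∨ s y.toList = x.toList
  symm := ⟨by
    rintro x y ⟨h1, s, hs, h2⟩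
    exact ⟨h1.symm, s, hs, h2.symm⟩⟩
  loopless := ⟨fun x h => h.1 rfl⟩

/-- The `ℓ_p`-distortion `c_{(p)}(X)` of a finite metric space `(X, d)`: the infimum over all
injective `1`-Lipschitz maps `F : X → ℓ_p(ℕ)` of `L_F = max_{x ≠ y} d(x,y)/‖F x − F y‖`. -/
def lpDistortion (X : Type*) [Fintype X] (d : X → X → ℝ) (p : ℝ≥0∞) : ℝ :=
  sInf {L : ℝ | ∃ F : X → lp (fun _ : ℕ => ℝ) p, Function.Injective F ∧
    (∀ x y : X, ‖F x - F y‖ ≤ d x y) ∧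
    L = sSup {r : ℝ | ∃ x y : X, x ≠ y ∧ r = d x y / ‖F x - F y‖}}

namespace Hanoi


/-- the transposition of `Fin 3` fixing `t` -/
def sw : Fin 3 → Fin 3 → Fin 3 := ![![0,2,1],![2,1,0],![1,0,2]]

lemma sw_self : ∀ t : Fin 3, sw t t = t := by decide

lemma sw_inj' : ∀ t a b : Fin 3, sw t a = sw t b → a = b := by decide

lemma sw_inj (t : Fin 3) : Function.Injective (sw t) := fun a b => sw_inj' t a b

lemma sw_sw : ∀ t a : Fin 3, sw t (sw t a) = a := by decide

lemma sw_ne_left : ∀ i j : Fin 3, i ≠ j → sw i j ≠ i := by decide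

lemma sw_ne_right : ∀ i j : Fin 3, i ≠ j → sw i j ≠ j := by decide

lemma eq_sw_of_ne : ∀ x i j : Fin 3, i ≠ j → x ≠ i → x ≠ j → x = sw i j := by decide

lemma sw_of_distinct : ∀ i j k : Fin 3, i ≠ j → i ≠ k → j ≠ k → sw i k = j := by decide

lemma mv_length (i j : Fin 3) (l : List (Fin 3)) : (hanoiMove i j l).length = l.length := by
  induction l with
  | nil => rfl
  | cons x w ih =>
    simp only [hanoiMove]
    split_ifs <;> simp [ih]

lemma mv_comm (i j : Fin 3) : hanoiMove i j = hanoiMove j i := by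
  funext l
  induction l with
  | nil => rfl
  | cons x w ih =>
    by_cases h1 : x = i
    · subst h1
      by_cases h2 : x = j
      · subst h2; rfl
      · simp [hanoiMove, h2]
    · by_cases h2 : x = j
      · subst h2; simp [hanoiMove, h1]
      · simp [hanoiMove, h1, h2, ih]

lemma mv_append {i j : Fin 3} {w : List (Fin 3)} (h : hanoiMove i j w ≠ w)
    (v : List (Fin 3)) : hanoiMove i j (w ++ v) = hanoiMove i j w ++ v := by
  induction w with
  | nil => exact absurd rfl h
  | cons x w ih =>
    by_cases h1 : x = i
    · subst h1; simp [hanoiMove]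
    · by_cases h2 : x = j
      · subst h2; simp [hanoiMove, h1]
      · have h' : hanoiMove i j w ≠ w := by
          simp only [hanoiMove, if_neg h1, if_neg h2] at h
          intro he; exact h (by rw [he])
        simp [hanoiMove, h1, h2, ih h']

lemma mv_replicate {i j k : Fin 3} (hki : k ≠ i) (hkj : k ≠ j) (m : ℕ) (l : List (Fin 3)) :
    hanoiMove i j (List.replicate m k ++ l) = List.replicate m k ++ hanoiMove i j l := by
  induction m with
  | zero => simp
  | succ m ih => simp [List.replicate_succ, hanoiMove, hki, hkj, ih]

lemma mv_map {i j : Fin 3} (π : Fin 3 → Fin 3) (hπ : Function.Injective π)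
    (l : List (Fin 3)) : hanoiMove (π i) (π j) (l.map π) = (hanoiMove i j l).map π := by
  induction l with
  | nil => rfl
  | cons x w ih =>
    by_cases h1 : x = i
    · subst h1; simp [hanoiMove]
    · by_cases h2 : x = j
      · subst h2
        have t1 : π x ≠ π i := fun he => h1 (hπ he)
        simp [hanoiMove, h1, t1]
      · have t1 : π x ≠ π i := fun he => h1 (hπ he)
        have t2 : π x ≠ π j := fun he => h2 (hπ he)
        simp [hanoiMove, h1, h2, t1, t2, ih]

lemma mv_mem {i j : Fin 3} (h : i ≠ j) :
    hanoiMove i j ∈ [hanoiMove 0 1, hanoiMove 0 2, hanoiMove 1 2] := by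
  fin_cases i <;> fin_cases j <;> simp_all <;>
    first
      | exact Or.inl (mv_comm _ _)
      | exact Or.inr (Or.inl (mv_comm _ _))
      | exact Or.inr (Or.inr (mv_comm _ _))





/-- corner vectors -/
def E (t : Fin 3) : EuclideanSpace ℝ (Fin 3) := EuclideanSpace.single t 1

/-- the gasket embedding, taking the word in reversed order (largest disk first) -/
def f : List (Fin 3) → EuclideanSpace ℝ (Fin 3)
  | [] => 0
  | t :: r => (2 ^ r.length : ℝ) • E t + f (r.map (sw t))
termination_by l => l.length
decreasing_by simp

lemma f_nil : f [] = 0 := by simp [f]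

lemma f_cons (t : Fin 3) (r : List (Fin 3)) :
    f (t :: r) = (2 ^ r.length : ℝ) • E t + f (r.map (sw t)) := by rw [f]

lemma E_apply (t c : Fin 3) : E t c = if c = t then 1 else 0 := by
  simp [E, EuclideanSpace.single_apply]

lemma f_apply_nonneg (l : List (Fin 3)) : ∀ (c : Fin 3), 0 ≤ f l c := by
  induction l using f.induct with
  | case1 => intro c; simp [f_nil]
  | case2 t r ih =>
      intro c
      have h1 := ih c
      simp at h1
      have : f (t :: r) c = (2 ^ r.length : ℝ) * E t c + f (r.map (sw t)) c := by
        simp [f_cons, PiLp.add_apply, PiLp.smul_apply, smul_eq_mul]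
      rw [this]
      have h2 : (0:ℝ) ≤ E t c := by rw [E_apply]; positivity
      positivity

lemma f_sum (l : List (Fin 3)) : ∑ c, f l c = 2 ^ l.length - 1 := by
  induction l using f.induct with
  | case1 => simp [f_nil]
  | case2 t r h1 =>
      rw [List.length_map] at h1
      have : ∀ c, f (t :: r) c = (2 ^ r.length : ℝ) * E t c + f (r.map (sw t)) c := by
        intro c; simp [f_cons, PiLp.add_apply, PiLp.smul_apply, smul_eq_mul]
      simp only [this, Finset.sum_add_distrib, ← Finset.mul_sum]
      have hE : ∑ c, E t c = 1 := by
        simp [E_apply]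
      simp at h1
      rw [hE, h1]
      simp [List.length_cons]
      ring

lemma f_coord_le (l : List (Fin 3)) (c : Fin 3) : f l c ≤ 2 ^ l.length - 1 := by
  rw [← f_sum l]
  exact Finset.single_le_sum (fun c _ => f_apply_nonneg l c) (Finset.mem_univ c)

lemma f_replicate (m : ℕ) (t : Fin 3) :
    f (List.replicate m t) = ((2:ℝ) ^ m - 1) • E t := by
  induction m with
  | zero => simp [f_nil]
  | succ m ih =>
    rw [List.replicate_succ, f_cons, List.map_replicate, sw_self, ih]
    rw [List.length_replicate]
    module

/-- norms -/
lemma norm_sq_eq (v : EuclideanSpace ℝ (Fin 3)) : ‖v‖ ^ 2 = ∑ c, (v c) ^ 2 := by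
  rw [EuclideanSpace.norm_eq, Real.sq_sqrt (by positivity)]
  simp [sq_abs]

lemma coord_le_norm (v : EuclideanSpace ℝ (Fin 3)) (c : Fin 3) : |v c| ≤ ‖v‖ := by
  have h1 : (v c) ^ 2 ≤ ‖v‖ ^ 2 := by
    rw [norm_sq_eq]
    exact Finset.single_le_sum (f := fun c => (v c)^2) (fun c _ => sq_nonneg _)
      (Finset.mem_univ c)
  calc |v c| = Real.sqrt ((v c)^2) := (Real.sqrt_sq_eq_abs _).symm
    _ ≤ Real.sqrt (‖v‖^2) := Real.sqrt_le_sqrt h1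
    _ = ‖v‖ := Real.sqrt_sq (norm_nonneg v)

lemma sum_three {i j k : Fin 3} (hij : i ≠ j) (hik : i ≠ k) (hjk : j ≠ k)
    (g : Fin 3 → ℝ) : ∑ c, g c = g i + g j + g k := by
  have : (Finset.univ : Finset (Fin 3)) = {i, j, k} := by
    revert hij hik hjk; fin_cases i <;> fin_cases j <;> fin_cases k <;> decide
  rw [this, Finset.sum_insert (by simp [hij, hik]), Finset.sum_insert (by simp [hjk]),
    Finset.sum_singleton, add_assoc]

lemma f_corner_pair_aux : ∀ (N : ℕ) (v : List (Fin 3)), v.length = N →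
    ∀ (m : ℕ) (i j k : Fin 3), i ≠ j → i ≠ k → j ≠ k →
    ∃ p q : Fin 3, p ≠ q ∧
      f (v ++ i :: List.replicate m k) - f (v ++ j :: List.replicate m k) = E p - E q := by
  intro N
  induction N with
  | zero =>
    intro v hv m i j k hij hik hjk
    rw [List.length_eq_zero_iff] at hv
    subst hv
    refine ⟨i, j, hij, ?_⟩
    simp only [List.nil_append, f_cons, List.map_replicate, List.length_replicate,
      sw_of_distinct i j k hij hik hjk, sw_of_distinct j i k (Ne.symm hij) hjk hik,
      f_replicate]
    module
  | succ N ih =>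
    intro v hv m i j k hij hik hjk
    match v with
    | t :: v =>
      have hv' : (v.map (sw t)).length = N := by
        rw [List.length_map]; simpa using hv
      obtain ⟨p, q, hpq, hE⟩ := ih (v.map (sw t)) hv' m (sw t i) (sw t j) (sw t k)
        (fun h => hij (sw_inj t h)) (fun h => hik (sw_inj t h)) (fun h => hjk (sw_inj t h))
      refine ⟨p, q, hpq, ?_⟩
      rw [List.cons_append, List.cons_append, f_cons, f_cons]
      simp only [List.map_append, List.map_cons, List.map_replicate, List.length_append,
        List.length_cons, List.length_replicate]
      rw [add_sub_add_left_eq_sub]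
      exact hE

lemma f_corner_pair (v : List (Fin 3)) (m : ℕ) (i j k : Fin 3)
    (hij : i ≠ j) (hik : i ≠ k) (hjk : j ≠ k) :
    ∃ p q : Fin 3, p ≠ q ∧
      f (v ++ i :: List.replicate m k) - f (v ++ j :: List.replicate m k) = E p - E q :=
  f_corner_pair_aux v.length v rfl m i j k hij hik hjk

lemma mv_decomp {i j : Fin 3} (hij : i ≠ j) : ∀ {l : List (Fin 3)}, hanoiMove i j l ≠ l →
    ∃ (m : ℕ) (u : List (Fin 3)) (a b : Fin 3), a ≠ b ∧ ((a = i ∧ b = j) ∨ (a = j ∧ b = i)) ∧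
      l = List.replicate m (sw i j) ++ a :: u ∧
      hanoiMove i j l = List.replicate m (sw i j) ++ b :: u := by
  intro l
  induction l with
  | nil => intro h; exact absurd rfl h
  | cons x w ih =>
    intro h
    by_cases h1 : x = i
    · subst h1
      exact ⟨0, w, x, j, hij, Or.inl ⟨rfl, rfl⟩, by simp, by simp [hanoiMove]⟩
    · by_cases h2 : x = j
      · subst h2
        exact ⟨0, w, x, i, Ne.symm hij, Or.inr ⟨rfl, rfl⟩, by simp, by simp [hanoiMove, h1]⟩
      · have hx : x = sw i j := eq_sw_of_ne x i j hij h1 h2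
        have h' : hanoiMove i j w ≠ w := by
          simp only [hanoiMove, if_neg h1, if_neg h2] at h
          exact fun he => h (by rw [he])
        obtain ⟨m, u, a, b, hab, hcase, hl, hm⟩ := ih h'
        subst hx
        refine ⟨m+1, u, a, b, hab, hcase, ?_, ?_⟩
        · rw [List.replicate_succ, List.cons_append, hl]
        · have : hanoiMove i j (sw i j :: w) = sw i j :: hanoiMove i j w := by
            simp [hanoiMove, h1, h2]
          rw [this, hm, List.replicate_succ, List.cons_append]

lemma f_move {i j : Fin 3} (hij : i ≠ j) {l : List (Fin 3)} (h : hanoiMove i j l ≠ l) :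
    ∃ p q : Fin 3, p ≠ q ∧ f ((hanoiMove i j l).reverse) - f (l.reverse) = E p - E q := by
  obtain ⟨m, u, a, b, hab, hcase, hl, hm⟩ := mv_decomp hij h
  have hrev : ∀ (c : Fin 3), (List.replicate m (sw i j) ++ c :: u).reverse
      = u.reverse ++ c :: List.replicate m (sw i j) := by
    intro c
    rw [List.reverse_append, List.reverse_cons, List.reverse_replicate, List.append_assoc,
      List.singleton_append]
  have hane : a ≠ sw i j := by
    rcases hcase with ⟨ha, _⟩ | ⟨ha, _⟩
    · rw [ha]; exact Ne.symm (sw_ne_left i j hij)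
    · rw [ha]; exact Ne.symm (sw_ne_right i j hij)
  have hbne : b ≠ sw i j := by
    rcases hcase with ⟨_, hb⟩ | ⟨_, hb⟩
    · rw [hb]; exact Ne.symm (sw_ne_right i j hij)
    · rw [hb]; exact Ne.symm (sw_ne_left i j hij)
  rw [hm, hl, hrev a, hrev b]
  exact f_corner_pair u.reverse m b a (sw i j) (Ne.symm hab) hbne hane

/-! ### graph level constructions -/

def liftVec {n : ℕ} (s : Fin 3) (u : List.Vector (Fin 3) n) : List.Vector (Fin 3) (n+1) :=
  ⟨u.toList ++ [s], by rw [List.length_append, u.toList_length]; rfl⟩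

def permVec {n : ℕ} (t : Fin 3) (u : List.Vector (Fin 3) n) : List.Vector (Fin 3) n :=
  ⟨u.toList.map (sw t), by rw [List.length_map, u.toList_length]⟩

def pf (n : ℕ) (t : Fin 3) : List.Vector (Fin 3) n := ⟨List.replicate n t, by simp⟩

lemma liftVec_toList {n : ℕ} (s : Fin 3) (u : List.Vector (Fin 3) n) :
    (liftVec s u).toList = u.toList ++ [s] := rfl

lemma permVec_toList {n : ℕ} (t : Fin 3) (u : List.Vector (Fin 3) n) :
    (permVec t u).toList = u.toList.map (sw t) := rfl

lemma pf_toList (n : ℕ) (t : Fin 3) : (pf n t).toList = List.replicate n t := rfl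

lemma permVec_permVec {n : ℕ} (t : Fin 3) (u : List.Vector (Fin 3) n) :
    permVec t (permVec t u) = u := by
  apply List.Vector.toList_injective
  simp only [permVec_toList, List.map_map]
  have : sw t ∘ sw t = id := by funext a; simp [sw_sw]
  simp [this]

lemma permVec_pf {n : ℕ} (t c : Fin 3) : permVec t (pf n c) = pf n (sw t c) := by
  apply List.Vector.toList_injective
  simp [permVec_toList, pf_toList, List.map_replicate]

lemma vec_decomp {n : ℕ} (x : List.Vector (Fin 3) (n+1)) :
    ∃ (u : List.Vector (Fin 3) n) (s : Fin 3), x = liftVec s u := by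
  rcases List.eq_nil_or_concat x.toList with h | ⟨L, b, h⟩
  · exfalso
    have := x.toList_length
    rw [h] at this
    simp at this
  · have hL : L.length = n := by
      have := x.toList_length
      rw [h] at this
      simpa using this
    exact ⟨⟨L, hL⟩, b, Subtype.ext (by simpa [List.concat_eq_append, liftVec, List.Vector.toList] using h)⟩

@[reducible]
def liftHom (n : ℕ) (s : Fin 3) : hanoiGraph n →g hanoiGraph (n+1) where
  toFun := liftVec s
  map_rel' := by
    rintro x y ⟨hne, m, hm, hxy⟩
    have hlne : x.toList ≠ y.toList := fun h => hne (Subtype.ext h)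
    constructor
    · intro he
      exact hne (Subtype.ext (by
        have := congrArg Subtype.val he
        simpa [liftVec, List.Vector.toList] using this))
    · refine ⟨m, hm, ?_⟩
      simp only [List.mem_cons, List.mem_singleton, List.not_mem_nil, or_false] at hm
      have key : ∀ (i j : Fin 3), m = hanoiMove i j →
          (m (liftVec s x).toList = (liftVec s y).toList ∨
           m (liftVec s y).toList = (liftVec s x).toList) := by
        intro i j hmij
        subst hmij
        rcases hxy with h | h
        · left
          have hne' : hanoiMove i j x.toList ≠ x.toList := by
            rw [h]; exact fun he => hlne he.symm
          rw [liftVec_toList, liftVec_toList, mv_append hne', h]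
        · right
          have hne' : hanoiMove i j y.toList ≠ y.toList := by
            rw [h]; exact hlne
          rw [liftVec_toList, liftVec_toList, mv_append hne', h]
      rcases hm with h | h | h
      · exact key 0 1 h
      · exact key 0 2 h
      · exact key 1 2 h

@[reducible]
def permHom (n : ℕ) (t : Fin 3) : hanoiGraph n →g hanoiGraph n where
  toFun := permVec t
  map_rel' := by
    rintro x y ⟨hne, m, hm, hxy⟩
    constructor
    · intro he
      apply hne
      rw [← permVec_permVec t x, ← permVec_permVec t y, he]
    · simp only [List.mem_cons, List.mem_singleton, List.not_mem_nil, or_false] at hm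
      have key : ∀ (i j : Fin 3), i ≠ j → m = hanoiMove i j →
          ∃ m' ∈ [hanoiMove 0 1, hanoiMove 0 2, hanoiMove 1 2],
            (m' (permVec t x).toList = (permVec t y).toList ∨
             m' (permVec t y).toList = (permVec t x).toList) := by
        intro i j hij hmij
        subst hmij
        refine ⟨hanoiMove (sw t i) (sw t j),
          mv_mem (fun h => hij (sw_inj t h)), ?_⟩
        rcases hxy with h | h
        · left
          rw [permVec_toList, permVec_toList, mv_map (sw t) (sw_inj t), h]
        · right
          rw [permVec_toList, permVec_toList, mv_map (sw t) (sw_inj t), h]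
      rcases hm with h | h | h
      · exact key 0 1 (by decide) h
      · exact key 0 2 (by decide) h
      · exact key 1 2 (by decide) h

lemma pf_succ (n : ℕ) (t : Fin 3) : pf (n+1) t = liftVec t (pf n t) := by
  apply List.Vector.toList_injective
  simp only [pf_toList, liftVec_toList, List.replicate_succ']

lemma adj_big_disk {n : ℕ} {s t : Fin 3} (hst : s ≠ t) (k : Fin 3) (hks : k ≠ s) (hkt : k ≠ t) :
    (hanoiGraph (n+1)).Adj (liftVec s (pf n k)) (liftVec t (pf n k)) := by
  constructor
  · intro he
    have := congrArg (fun v => v.toList.getLast?) he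
    simp [liftVec_toList] at this
    exact hst this
  · refine ⟨hanoiMove s t, mv_mem hst, Or.inl ?_⟩
    rw [liftVec_toList, liftVec_toList, pf_toList, mv_replicate hks hkt]
    simp [hanoiMove]

lemma claim0 : ∀ (n : ℕ) (t : Fin 3) (x : List.Vector (Fin 3) n),
    ∃ p : (hanoiGraph n).Walk x (pf n t), p.length + 1 ≤ 2 ^ n := by
  intro n
  induction n with
  | zero =>
    intro t x
    have hx : x = pf 0 t := Subtype.ext (by
      have h1 := x.toList_length
      rw [List.length_eq_zero_iff] at h1
      simp [pf]
      exact h1)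
    refine ⟨(SimpleGraph.Walk.nil (u := pf 0 t)).copy hx.symm rfl, ?_⟩
    simp
  | succ n ih =>
    intro t x
    obtain ⟨u, s, rfl⟩ := vec_decomp x
    by_cases hst : s = t
    · subst hst
      obtain ⟨p, hp⟩ := ih s u
      refine ⟨((p.map (liftHom n s)).copy rfl (pf_succ n s).symm), ?_⟩
      rw [SimpleGraph.Walk.length_copy, SimpleGraph.Walk.length_map]
      calc p.length + 1 ≤ 2 ^ n := hp
        _ ≤ 2 ^ (n+1) := Nat.pow_le_pow_right (by norm_num) (Nat.le_succ n)
    · set k := sw s t with hk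
      have hks : k ≠ s := sw_ne_left s t hst
      have hkt : k ≠ t := sw_ne_right s t hst
      obtain ⟨p1, hp1⟩ := ih k u
      obtain ⟨p2, hp2⟩ := ih t (pf n k)
      have q1 := p1.map (liftHom n s)
      have adj := adj_big_disk hst k hks hkt (n := n)
      refine ⟨((p1.map (liftHom n s)).append
        (SimpleGraph.Walk.cons adj ((p2.map (liftHom n t)).copy rfl (pf_succ n t).symm))), ?_⟩
      rw [SimpleGraph.Walk.length_append, SimpleGraph.Walk.length_cons,
        SimpleGraph.Walk.length_copy, SimpleGraph.Walk.length_map, SimpleGraph.Walk.length_map]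
      have : 2 ^ (n+1) = 2 ^ n + 2 ^ n := by rw [pow_succ]; omega
      omega

/-! ### the embedding on vectors -/

def fr {n : ℕ} (x : List.Vector (Fin 3) n) : EuclideanSpace ℝ (Fin 3) :=
  f x.toList.reverse

lemma fr_lift {n : ℕ} (s : Fin 3) (u : List.Vector (Fin 3) n) :
    fr (liftVec s u) = (2 ^ n : ℝ) • E s + f (u.toList.reverse.map (sw s)) := by
  unfold fr
  rw [liftVec_toList, List.reverse_append]
  have h1 : ([s].reverse ++ u.toList.reverse) = s :: u.toList.reverse := by simp
  rw [h1, f_cons, List.length_reverse, u.toList_length]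

lemma fr_perm {n : ℕ} (t : Fin 3) (u : List.Vector (Fin 3) n) :
    fr (permVec t u) = f (u.toList.reverse.map (sw t)) := by
  unfold fr
  rw [permVec_toList, List.map_reverse]

lemma fr_pf (n : ℕ) (t : Fin 3) : fr (pf n t) = ((2:ℝ) ^ n - 1) • E t := by
  unfold fr
  rw [pf_toList, List.reverse_replicate, f_replicate]

lemma norm_E (p : Fin 3) : ‖E p‖ = 1 := by
  rw [E, EuclideanSpace.norm_single]
  norm_num

lemma adj_diff {n : ℕ} {x y : List.Vector (Fin 3) n} (h : (hanoiGraph n).Adj x y) :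
    ∃ p q : Fin 3, p ≠ q ∧ fr x - fr y = E p - E q := by
  obtain ⟨hne, m, hm, hxy⟩ := h
  have hlne : x.toList ≠ y.toList := fun h => hne (Subtype.ext h)
  simp only [List.mem_cons, List.mem_singleton, List.not_mem_nil, or_false] at hm
  have key : ∀ (i j : Fin 3), i ≠ j → m = hanoiMove i j →
      ∃ p q : Fin 3, p ≠ q ∧ fr x - fr y = E p - E q := by
    intro i j hij hmij
    subst hmij
    rcases hxy with h | h
    · have hmv : hanoiMove i j x.toList ≠ x.toList := by
        rw [h]; exact fun he => hlne he.symm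
      obtain ⟨p, q, hpq, hE⟩ := f_move hij hmv
      rw [h] at hE
      refine ⟨q, p, hpq.symm, ?_⟩
      unfold fr
      rw [show f x.toList.reverse - f y.toList.reverse
          = -(f y.toList.reverse - f x.toList.reverse) by abel, hE]
      abel
    · have hmv : hanoiMove i j y.toList ≠ y.toList := by
        rw [h]; exact hlne
      obtain ⟨p, q, hpq, hE⟩ := f_move hij hmv
      rw [h] at hE
      exact ⟨p, q, hpq, hE⟩

  rcases hm with h | h | h
  · exact key 0 1 (by decide) h
  · exact key 0 2 (by decide) h
  · exact key 1 2 (by decide) h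

lemma edge_norm {n : ℕ} {x y : List.Vector (Fin 3) n} (h : (hanoiGraph n).Adj x y) :
    ‖fr x - fr y‖ ≤ 2 := by
  obtain ⟨p, q, hpq, hE⟩ := adj_diff h
  rw [hE]
  calc ‖E p - E q‖ ≤ ‖E p‖ + ‖E q‖ := norm_sub_le _ _
    _ = 2 := by rw [norm_E, norm_E]; norm_num

lemma walk_norm {n : ℕ} : ∀ {x y : List.Vector (Fin 3) n}
    (w : (hanoiGraph n).Walk x y), ‖fr x - fr y‖ ≤ 2 * w.length := by
  intro x y w
  induction w with
  | nil => simp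
  | @cons a b c hadj q ih =>
    calc ‖fr a - fr c‖ ≤ ‖fr a - fr b‖ + ‖fr b - fr c‖ := by
          have : fr a - fr c = (fr a - fr b) + (fr b - fr c) := by abel
          rw [this]; exact norm_add_le _ _
      _ ≤ 2 + 2 * q.length := add_le_add (edge_norm hadj) ih
      _ = 2 * (SimpleGraph.Walk.cons hadj q).length := by
          rw [SimpleGraph.Walk.length_cons]
          push_cast
          ring

/-! ### Claim 1 : distance to the corners -/

lemma claim1 : ∀ (n : ℕ) (t : Fin 3) (x : List.Vector (Fin 3) n),
    ∃ p : (hanoiGraph n).Walk x (pf n t),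
      (p.length : ℝ) ≤ 2 * ‖fr x - ((2:ℝ) ^ n - 1) • E t‖ := by
  intro n
  induction n with
  | zero =>
    intro t x
    have hx : x = pf 0 t := Subtype.ext (by
      have h1 := x.toList_length
      rw [List.length_eq_zero_iff] at h1
      simp [pf]
      exact h1)
    refine ⟨(SimpleGraph.Walk.nil (u := pf 0 t)).copy hx.symm rfl, ?_⟩
    simp only [SimpleGraph.Walk.length_copy, SimpleGraph.Walk.length_nil]
    push_cast
    positivity
  | succ n ih =>
    intro t x
    obtain ⟨u, s, rfl⟩ := vec_decomp x
    by_cases hst : s = t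
    · subst hst
      -- recurse into the subtriangle
      obtain ⟨p, hp⟩ := ih s (permVec s u)
      refine ⟨(((p.map (permHom n s)).copy (permVec_permVec s u) (by
          show permVec s (pf n s) = pf n s
          rw [permVec_pf, sw_self])).map (liftHom n s)).copy rfl (pf_succ n s).symm, ?_⟩
      simp only [SimpleGraph.Walk.length_copy, SimpleGraph.Walk.length_map]
      refine hp.trans (le_of_eq ?_)
      congr 1
      rw [fr_perm, fr_lift]
      congr 1
      have : (2:ℝ) ^ n • E s + f (List.map (sw s) u.toList.reverse)
          - ((2:ℝ) ^ (n+1) - 1) • E s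
          = f (List.map (sw s) u.toList.reverse) - ((2:ℝ) ^ n - 1) • E s := by
        have h2 : (2:ℝ) ^ (n+1) = 2 ^ n * 2 := by ring
        rw [h2]
        module
      rw [this]
    · -- far corner : use the crude bound
      obtain ⟨p, hp⟩ := claim0 (n+1) t (liftVec s u)
      refine ⟨p, ?_⟩
      have hcoord : fr (liftVec s u) t ≤ (2:ℝ) ^ n - 1 := by
        rw [fr_lift]
        have h1 : ((2:ℝ) ^ n • E s + f (u.toList.reverse.map (sw s))) t
            = (2:ℝ) ^ n * E s t + f (u.toList.reverse.map (sw s)) t := by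
          simp [PiLp.add_apply, PiLp.smul_apply, smul_eq_mul]
        rw [h1, E_apply, if_neg (fun h => hst h.symm)]
        have h2 := f_coord_le (u.toList.reverse.map (sw s)) t
        rw [List.length_map, List.length_reverse, u.toList_length] at h2
        linarith
      have hnorm : (2:ℝ) ^ n ≤ ‖fr (liftVec s u) - ((2:ℝ) ^ (n+1) - 1) • E t‖ := by
        have h1 : (fr (liftVec s u) - ((2:ℝ) ^ (n+1) - 1) • E t) t
            = fr (liftVec s u) t - ((2:ℝ) ^ (n+1) - 1) := by
          simp [PiLp.sub_apply, PiLp.smul_apply, smul_eq_mul, E_apply]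
        have h2 := coord_le_norm (fr (liftVec s u) - ((2:ℝ) ^ (n+1) - 1) • E t) t
        rw [h1] at h2
        have h3 : (2:ℝ) ^ (n+1) = 2 ^ n * 2 := by ring
        have hpow : (0:ℝ) < 2 ^ n := pow_pos (by norm_num) n
        have h4 : |fr (liftVec s u) t - ((2:ℝ) ^ (n+1) - 1)|
            ≥ (2:ℝ) ^ n := by
          rw [abs_sub_comm, abs_of_nonneg (by nlinarith [hpow, hcoord])]
          nlinarith [hpow, hcoord]
        linarith
      have h5 : (p.length : ℝ) ≤ 2 ^ (n+1) - 1 := by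
        have := hp
        have : ((p.length + 1 : ℕ) : ℝ) ≤ ((2 ^ (n+1) : ℕ) : ℝ) := by exact_mod_cast this
        push_cast at this
        linarith
      calc (p.length : ℝ) ≤ 2 ^ (n+1) - 1 := h5
        _ ≤ 2 * 2 ^ n := by rw [pow_succ]; linarith [pow_pos (show (0:ℝ) < 2 by norm_num) n]
        _ ≤ 2 * ‖fr (liftVec s u) - ((2:ℝ) ^ (n+1) - 1) • E t‖ := by linarith

/-! ### the main claim : walks of length controlled by the embedding -/

lemma sw_comm : ∀ a b : Fin 3, sw b a = sw a b := by decide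


lemma cone1 (M A1 A2 A3 B1 B2 B3 : ℝ) (hA1 : 0 ≤ A1) (hA2 : 0 ≤ A2) (hA3 : 0 ≤ A3)
    (hB1 : 0 ≤ B1) (hB2 : 0 ≤ B2) (hB3 : 0 ≤ B3)
    (hA : A1 + A2 + A3 = M) (hB : B1 + B2 + B3 = M) :
    A1^2 + (A2 - M)^2 + A3^2 ≤ (4/3) * ((A1 - (B1 - M))^2 + ((A2 - M) - B2)^2 + (A3 - B3)^2) := by
  nlinarith [sq_nonneg (B3 - A3/2), mul_nonneg hA1 hB2, mul_nonneg hA1 hB3,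
    mul_nonneg hA3 hB2, mul_nonneg hA1 (add_nonneg hA1 hA3), mul_nonneg hA3 hB3,
    mul_nonneg hA1 hA3, sq_nonneg A1, sq_nonneg A3]

lemma cone2 (M A1 A2 A3 B1 B2 B3 : ℝ) (hA1 : 0 ≤ A1) (hA2 : 0 ≤ A2) (hA3 : 0 ≤ A3)
    (hB1 : 0 ≤ B1) (hB2 : 0 ≤ B2) (hB3 : 0 ≤ B3)
    (hA : A1 + A2 + A3 = M) (hB : B1 + B2 + B3 = M) :
    (B1 - M)^2 + B2^2 + B3^2 ≤ (4/3) * ((A1 - (B1 - M))^2 + ((A2 - M) - B2)^2 + (A3 - B3)^2) := by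
  nlinarith [sq_nonneg (A3 - B3/2), mul_nonneg hB2 hA1, mul_nonneg hB2 hA3,
    mul_nonneg hB3 hA1, mul_nonneg hB2 (add_nonneg hB2 hB3), mul_nonneg hB3 hA3,
    mul_nonneg hB2 hB3, sq_nonneg B2, sq_nonneg B3]


set_option maxHeartbeats 1600000 in
lemma main_claim : ∀ (n : ℕ) (x y : List.Vector (Fin 3) n),
    ∃ p : (hanoiGraph n).Walk x y, (p.length : ℝ) ≤ 20 * ‖fr x - fr y‖ := by
  intro n
  induction n with
  | zero =>
    intro x y
    have hxy : x = y := by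
      apply List.Vector.toList_injective
      have h1 := x.toList_length
      have h2 := y.toList_length
      rw [List.length_eq_zero_iff] at h1 h2
      rw [h1, h2]
    refine ⟨(SimpleGraph.Walk.nil (u := x)).copy rfl hxy, ?_⟩
    simp only [SimpleGraph.Walk.length_copy, SimpleGraph.Walk.length_nil]
    push_cast
    positivity
  | succ n ih =>
    intro x y
    obtain ⟨u, s, rfl⟩ := vec_decomp x
    obtain ⟨v, t, rfl⟩ := vec_decomp y
    have hfx : fr (liftVec s u) = (2 ^ n : ℝ) • E s + fr (permVec s u) := by
      rw [fr_lift, fr_perm]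
    have hfy : fr (liftVec t v) = (2 ^ n : ℝ) • E t + fr (permVec t v) := by
      rw [fr_lift, fr_perm]
    by_cases hst : s = t
    · subst hst
      obtain ⟨q, hq⟩ := ih (permVec s u) (permVec s v)
      refine ⟨((q.map (permHom n s)).copy (permVec_permVec s u)
        (permVec_permVec s v)).map (liftHom n s), ?_⟩
      simp only [SimpleGraph.Walk.length_map, SimpleGraph.Walk.length_copy]
      refine hq.trans (le_of_eq ?_)
      congr 1
      rw [hfx, hfy]
      congr 1
      abel
    · -- different top letters
      obtain ⟨q1, hq1⟩ := claim1 n t (permVec s u)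
      obtain ⟨q2, hq2⟩ := claim1 n s (permVec t v)
      have hks : sw s t ≠ s := sw_ne_left s t hst
      have hkt : sw s t ≠ t := sw_ne_right s t hst
      have hedge := adj_big_disk (n := n) hst (sw s t) hks hkt
      let r1 : (hanoiGraph n).Walk u (pf n (sw s t)) :=
        (q1.map (permHom n s)).copy (permVec_permVec s u)
          (by show permVec s (pf n t) = pf n (sw s t); rw [permVec_pf])
      let r2 : (hanoiGraph n).Walk v (pf n (sw s t)) :=
        (q2.map (permHom n t)).copy (permVec_permVec t v)
          (by show permVec t (pf n s) = pf n (sw s t); rw [permVec_pf, sw_comm s t])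
      refine ⟨(r1.map (liftHom n s)).append
        (SimpleGraph.Walk.cons hedge ((r2.map (liftHom n t)).reverse)), ?_⟩
      rw [SimpleGraph.Walk.length_append, SimpleGraph.Walk.length_cons,
        SimpleGraph.Walk.length_reverse, SimpleGraph.Walk.length_map,
        SimpleGraph.Walk.length_map]
      have hlen1 : (r1.length : ℝ) ≤ 2 * ‖fr (permVec s u) - ((2:ℝ) ^ n - 1) • E t‖ := by
        simpa [r1] using hq1
      have hlen2 : (r2.length : ℝ) ≤ 2 * ‖fr (permVec t v) - ((2:ℝ) ^ n - 1) • E s‖ := by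
        simpa [r2] using hq2
      -- geometry
      set Sv := fr (permVec s u) with hSv
      set Tv := fr (permVec t v) with hTv
      set a := Sv - ((2:ℝ) ^ n - 1) • E t with ha
      set b := Tv - ((2:ℝ) ^ n - 1) • E s with hb
      set D := ‖fr (liftVec s u) - fr (liftVec t v)‖ with hD
      have hSnn : ∀ c, 0 ≤ Sv c := by
        intro c; rw [hSv, fr_perm]; exact f_apply_nonneg _ c
      have hTnn : ∀ c, 0 ≤ Tv c := by
        intro c; rw [hTv, fr_perm]; exact f_apply_nonneg _ c
      have hSsum : Sv s + Sv t + Sv (sw s t) = (2:ℝ) ^ n - 1 := by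
        rw [← sum_three hst (Ne.symm hks) (Ne.symm hkt) (fun c => Sv c)]
        rw [hSv, fr_perm, f_sum, List.length_map, List.length_reverse, u.toList_length]
      have hTsum : Tv s + Tv t + Tv (sw s t) = (2:ℝ) ^ n - 1 := by
        rw [← sum_three hst (Ne.symm hks) (Ne.symm hkt) (fun c => Tv c)]
        rw [hTv, fr_perm, f_sum, List.length_map, List.length_reverse, v.toList_length]
      have hM1 : (1:ℝ) ≤ 2 ^ n := by
        have := Nat.one_le_two_pow (n := n)
        exact_mod_cast this
      -- coordinates of a and b
      have hac : ∀ c, a c = Sv c - ((2:ℝ) ^ n - 1) * (if c = t then 1 else 0) := by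
        intro c
        rw [ha]
        simp [PiLp.sub_apply, PiLp.smul_apply, smul_eq_mul, E_apply]
      have hbc : ∀ c, b c = Tv c - ((2:ℝ) ^ n - 1) * (if c = s then 1 else 0) := by
        intro c
        rw [hb]
        simp [PiLp.sub_apply, PiLp.smul_apply, smul_eq_mul, E_apply]
      have has : a s = Sv s := by rw [hac s, if_neg hst]; ring
      have hat : a t = Sv t - ((2:ℝ) ^ n - 1) := by rw [hac t, if_pos rfl]; ring
      have hak : a (sw s t) = Sv (sw s t) := by rw [hac _, if_neg hkt]; ring
      have hbs : b s = Tv s - ((2:ℝ) ^ n - 1) := by rw [hbc s, if_pos rfl]; ring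
      have hbt : b t = Tv t := by rw [hbc t, if_neg (fun h => hst h.symm)]; ring
      have hbk : b (sw s t) = Tv (sw s t) := by rw [hbc _, if_neg hks]; ring
      have hns : ∀ w : EuclideanSpace ℝ (Fin 3),
          ‖w‖ ^ 2 = w s ^ 2 + w t ^ 2 + w (sw s t) ^ 2 := by
        intro w
        rw [norm_sq_eq, sum_three hst (Ne.symm hks) (Ne.symm hkt)]
      -- D ≥ 1
      have hD1 : (1:ℝ) ≤ D := by
        have h1 : fr (liftVec s u) s = 2 ^ n + Sv s := by
          rw [hfx]
          simp [PiLp.add_apply, PiLp.smul_apply, smul_eq_mul, E_apply]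
        have h2 : fr (liftVec t v) s = Tv s := by
          rw [hfy]
          simp [PiLp.add_apply, PiLp.smul_apply, smul_eq_mul, E_apply, hst]
        have h3 : Tv s ≤ 2 ^ n - 1 := by
          nlinarith [hTnn t, hTnn (sw s t), hTsum]
        have h4 : (fr (liftVec s u) - fr (liftVec t v)) s
            = fr (liftVec s u) s - fr (liftVec t v) s := by
          simp [PiLp.sub_apply]
        have h5 := coord_le_norm (fr (liftVec s u) - fr (liftVec t v)) s
        rw [h4, h1, h2] at h5
        have h6 := le_abs_self (2 ^ n + Sv s - Tv s)
        have := hSnn s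
        rw [hD]
        linarith
      -- separation of the subtriangles
      have hi : a - b = (fr (liftVec s u) - fr (liftVec t v)) - (E s - E t) := by
        rw [ha, hb, hfx, hfy]
        module
      have hab : ‖a - b‖ ≤ D + 2 := by
        rw [hi]
        calc ‖(fr (liftVec s u) - fr (liftVec t v)) - (E s - E t)‖
            ≤ ‖fr (liftVec s u) - fr (liftVec t v)‖ + ‖E s - E t‖ := norm_sub_le _ _
          _ ≤ D + 2 := by
              have h7 := norm_sub_le (E s) (E t)
              rw [norm_E, norm_E] at h7
              rw [hD]
              linarith
      -- cone estimates
      have hsubc : ∀ c, (a - b) c = a c - b c := fun c => rfl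
      have hnA : ‖a‖ ^ 2 = Sv s ^ 2 + (Sv t - ((2:ℝ) ^ n - 1)) ^ 2 + Sv (sw s t) ^ 2 := by
        rw [hns a, has, hat, hak]
      have hnB : ‖b‖ ^ 2 = (Tv s - ((2:ℝ) ^ n - 1)) ^ 2 + Tv t ^ 2 + Tv (sw s t) ^ 2 := by
        rw [hns b, hbs, hbt, hbk]
      have hnAB : ‖a - b‖ ^ 2 = (Sv s - (Tv s - ((2:ℝ) ^ n - 1))) ^ 2
          + ((Sv t - ((2:ℝ) ^ n - 1)) - Tv t) ^ 2
          + (Sv (sw s t) - Tv (sw s t)) ^ 2 := by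
        rw [hns (a - b), hsubc s, hsubc t, hsubc (sw s t), has, hat, hak, hbs, hbt, hbk]
      clear_value Sv Tv a b D
      have key1 : ‖a‖ ^ 2 ≤ (4/3) * ‖a - b‖ ^ 2 := by
        rw [hnA, hnAB]
        exact cone1 _ _ _ _ _ _ _ (hSnn s) (hSnn t) (hSnn (sw s t)) (hTnn s) (hTnn t)
          (hTnn (sw s t)) hSsum hTsum
      have key2 : ‖b‖ ^ 2 ≤ (4/3) * ‖a - b‖ ^ 2 := by
        rw [hnB, hnAB]
        exact cone2 _ _ _ _ _ _ _ (hSnn s) (hSnn t) (hSnn (sw s t)) (hTnn s) (hTnn t)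
          (hTnn (sw s t)) hSsum hTsum
      -- put everything together
      have h8 : ‖a - b‖ ≤ 3 * D := by linarith
      have h9 : ‖a‖ ^ 2 ≤ 12 * D ^ 2 := by
        nlinarith [key1, mul_self_le_mul_self (norm_nonneg (a - b)) h8]
      have h10 : ‖b‖ ^ 2 ≤ 12 * D ^ 2 := by
        nlinarith [key2, mul_self_le_mul_self (norm_nonneg (a - b)) h8]
      have h11 : ‖a‖ ≤ 4 * D := by
        nlinarith [h9, norm_nonneg a, hD1]
      have h12 : ‖b‖ ≤ 4 * D := by
        nlinarith [h10, norm_nonneg b, hD1]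
      push_cast
      linarith [hlen1, hlen2]

/-! ### the embedding into `ℓ^p` -/

lemma norm_le_sum_abs (v : EuclideanSpace ℝ (Fin 3)) : ‖v‖ ≤ |v 0| + |v 1| + |v 2| := by
  have h := norm_sq_eq v
  rw [Fin.sum_univ_three] at h
  nlinarith [norm_nonneg v, abs_nonneg (v 0), abs_nonneg (v 1), abs_nonneg (v 2),
    sq_abs (v 0), sq_abs (v 1), sq_abs (v 2),
    mul_nonneg (abs_nonneg (v 0)) (abs_nonneg (v 1)),
    mul_nonneg (abs_nonneg (v 0)) (abs_nonneg (v 2)),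
    mul_nonneg (abs_nonneg (v 1)) (abs_nonneg (v 2))]

def Glp (p : ℝ≥0∞) (v : EuclideanSpace ℝ (Fin 3)) : lp (fun _ : ℕ => ℝ) p :=
  lp.single p 0 (v 0) + lp.single p 1 (v 1) + lp.single p 2 (v 2)

lemma Glp_apply (p : ℝ≥0∞) (v : EuclideanSpace ℝ (Fin 3)) (j : ℕ) :
    (Glp p v : ∀ _ : ℕ, ℝ) j
      = if j = 0 then v 0 else if j = 1 then v 1 else if j = 2 then v 2 else 0 := by
  have hadd : (Glp p v : ∀ _ : ℕ, ℝ) j = (lp.single p (0:ℕ) (v 0) : ∀ _ : ℕ, ℝ) j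
      + (lp.single p (1:ℕ) (v 1) : ∀ _ : ℕ, ℝ) j + (lp.single p (2:ℕ) (v 2) : ∀ _ : ℕ, ℝ) j := by
    simp [Glp]
  by_cases h0 : j = 0
  · subst h0
    rw [hadd, lp.single_apply_self (E := fun _ : ℕ => ℝ), lp.single_apply_ne (E := fun _ : ℕ => ℝ) p 1 _ (by norm_num),
      lp.single_apply_ne (E := fun _ : ℕ => ℝ) p 2 _ (by norm_num)]
    norm_num
  · by_cases h1 : j = 1
    · subst h1
      rw [hadd, lp.single_apply_self (E := fun _ : ℕ => ℝ), lp.single_apply_ne (E := fun _ : ℕ => ℝ) p 0 _ (by norm_num),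
        lp.single_apply_ne (E := fun _ : ℕ => ℝ) p 2 _ (by norm_num)]
      norm_num
    · by_cases h2 : j = 2
      · subst h2
        rw [hadd, lp.single_apply_self (E := fun _ : ℕ => ℝ), lp.single_apply_ne (E := fun _ : ℕ => ℝ) p 0 _ (by norm_num),
          lp.single_apply_ne (E := fun _ : ℕ => ℝ) p 1 _ (by norm_num)]
        norm_num [h0, h1]
      · rw [hadd, lp.single_apply_ne (E := fun _ : ℕ => ℝ) p 0 _ h0, lp.single_apply_ne (E := fun _ : ℕ => ℝ) p 1 _ h1,
          lp.single_apply_ne (E := fun _ : ℕ => ℝ) p 2 _ h2]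
        simp [h0, h1, h2]

lemma Glp_sub (p : ℝ≥0∞) (v w : EuclideanSpace ℝ (Fin 3)) :
    Glp p v - Glp p w = Glp p (v - w) := by
  apply lp.ext
  funext j
  have hs : ((Glp p v - Glp p w : lp (fun _ : ℕ => ℝ) p) : ∀ _ : ℕ, ℝ) j
      = (Glp p v : ∀ _ : ℕ, ℝ) j - (Glp p w : ∀ _ : ℕ, ℝ) j := by
    rw [lp.coeFn_sub, Pi.sub_apply]
  rw [hs, Glp_apply, Glp_apply, Glp_apply]
  have h0 : (v - w) 0 = v 0 - w 0 := rfl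
  have h1 : (v - w) 1 = v 1 - w 1 := rfl
  have h2 : (v - w) 2 = v 2 - w 2 := rfl
  split_ifs <;> simp [h0, h1, h2]

lemma Glp_norm_le (p : ℝ≥0∞) [Fact (1 ≤ p)] (hp : 0 < p.toReal)
    (v : EuclideanSpace ℝ (Fin 3)) :
    ‖Glp p v‖ ≤ |v 0| + |v 1| + |v 2| := by
  have h0 : ‖(lp.single p (0:ℕ) (v 0) : lp (fun _ : ℕ => ℝ) p)‖ = |v 0| := by
    have := lp.norm_single (E := fun _ : ℕ => ℝ) (p := p) (ENNReal.toReal_pos_iff.mp hp).1 0 (v 0)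
    simpa [Real.norm_eq_abs] using this
  have h1 : ‖(lp.single p (1:ℕ) (v 1) : lp (fun _ : ℕ => ℝ) p)‖ = |v 1| := by
    have := lp.norm_single (E := fun _ : ℕ => ℝ) (p := p) (ENNReal.toReal_pos_iff.mp hp).1 1 (v 1)
    simpa [Real.norm_eq_abs] using this
  have h2 : ‖(lp.single p (2:ℕ) (v 2) : lp (fun _ : ℕ => ℝ) p)‖ = |v 2| := by
    have := lp.norm_single (E := fun _ : ℕ => ℝ) (p := p) (ENNReal.toReal_pos_iff.mp hp).1 2 (v 2)
    simpa [Real.norm_eq_abs] using this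
  have t1 : ‖Glp p v‖ ≤ ‖(lp.single p (0:ℕ) (v 0) : lp (fun _ : ℕ => ℝ) p)
      + lp.single p (1:ℕ) (v 1)‖ + ‖(lp.single p (2:ℕ) (v 2) : lp (fun _ : ℕ => ℝ) p)‖ :=
    norm_add_le _ _
  have t2 : ‖(lp.single p (0:ℕ) (v 0) : lp (fun _ : ℕ => ℝ) p) + lp.single p (1:ℕ) (v 1)‖
      ≤ ‖(lp.single p (0:ℕ) (v 0) : lp (fun _ : ℕ => ℝ) p)‖
        + ‖(lp.single p (1:ℕ) (v 1) : lp (fun _ : ℕ => ℝ) p)‖ :=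
    norm_add_le _ _
  rw [h0, h1] at t2
  rw [h2] at t1
  linarith

lemma Glp_coord (p : ℝ≥0∞) [Fact (1 ≤ p)] (hp : p ≠ 0) (v : EuclideanSpace ℝ (Fin 3)) :
    |v 0| ≤ ‖Glp p v‖ ∧ |v 1| ≤ ‖Glp p v‖ ∧ |v 2| ≤ ‖Glp p v‖ := by
  refine ⟨?_, ?_, ?_⟩
  · have := lp.norm_apply_le_norm hp (Glp p v) 0
    rw [Glp_apply] at this
    simpa [Real.norm_eq_abs] using this
  · have := lp.norm_apply_le_norm hp (Glp p v) 1
    rw [Glp_apply] at this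
    simpa [Real.norm_eq_abs] using this
  · have := lp.norm_apply_le_norm hp (Glp p v) 2
    rw [Glp_apply] at this
    simpa [Real.norm_eq_abs] using this

end Hanoi

/-- Theorem 11: for each `1 ≤ p < ∞` the `ℓ_p`-distortion of the Hanoi
Schreier graphs `Γ_n` is uniformly bounded. -/
theorem statement_16 (p : ℝ) (hp : 1 ≤ p) :
    ∃ C : ℝ, 0 < C ∧ ∀ n : ℕ, 1 ≤ n →
      lpDistortion (List.Vector (Fin 3) n)
          (fun x y => ((hanoiGraph n).dist x y : ℝ)) (ENNReal.ofReal p) ≤ C := by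
  classical
  refine ⟨500, by norm_num, ?_⟩
  intro n hn
  haveI hfact : Fact (1 ≤ ENNReal.ofReal p) :=
    ⟨by rw [← ENNReal.ofReal_one]; exact ENNReal.ofReal_le_ofReal hp⟩
  have hp0 : (0:ℝ) ≤ p := by linarith
  have hptR : 0 < (ENNReal.ofReal p).toReal := by
    rw [ENNReal.toReal_ofReal hp0]; linarith
  have hpne : (ENNReal.ofReal p) ≠ 0 := by
    intro h
    rw [ENNReal.ofReal_eq_zero] at h
    linarith
  set q : ℝ≥0∞ := ENNReal.ofReal p with hq
  set F : List.Vector (Fin 3) n → lp (fun _ : ℕ => ℝ) q :=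
    fun x => Hanoi.Glp q ((8:ℝ)⁻¹ • Hanoi.fr x) with hF
  -- difference formula
  have hFdiff : ∀ x y, F x - F y = Hanoi.Glp q ((8:ℝ)⁻¹ • (Hanoi.fr x - Hanoi.fr y)) := by
    intro x y
    rw [hF]
    rw [Hanoi.Glp_sub, ← smul_sub]
  -- key estimates for distinct points
  have hkey : ∀ x y : List.Vector (Fin 3) n, x ≠ y →
      (1:ℝ) ≤ (hanoiGraph n).dist x y ∧
      ‖F x - F y‖ ≤ ((hanoiGraph n).dist x y : ℝ) ∧
      ((hanoiGraph n).dist x y : ℝ) ≤ 480 * ‖F x - F y‖ := by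
    intro x y hxy
    obtain ⟨w20, hw20⟩ := Hanoi.main_claim n x y
    have hreach : (hanoiGraph n).Reachable x y := ⟨w20⟩
    have hd1 : 1 ≤ (hanoiGraph n).dist x y := hreach.pos_dist_of_ne hxy
    have hd1' : (1:ℝ) ≤ ((hanoiGraph n).dist x y : ℝ) := by exact_mod_cast hd1
    have hdist_le : ((hanoiGraph n).dist x y : ℝ) ≤ 20 * ‖Hanoi.fr x - Hanoi.fr y‖ := by
      have h1 : (hanoiGraph n).dist x y ≤ w20.length := SimpleGraph.dist_le w20
      have h1' : ((hanoiGraph n).dist x y : ℝ) ≤ (w20.length : ℝ) := by exact_mod_cast h1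
      linarith
    set Δ : EuclideanSpace ℝ (Fin 3) := Hanoi.fr x - Hanoi.fr y with hΔ
    have hsm : ∀ c : Fin 3, ((8:ℝ)⁻¹ • Δ) c = (8:ℝ)⁻¹ * Δ c := fun c => rfl
    -- upper bound (Lipschitz)
    have hup : ‖F x - F y‖ ≤ ((hanoiGraph n).dist x y : ℝ) := by
      obtain ⟨w, hwl⟩ := hreach.exists_walk_length_eq_dist
      have h2d : ‖Δ‖ ≤ 2 * ((hanoiGraph n).dist x y : ℝ) := by
        have := Hanoi.walk_norm w
        rw [hwl] at this
        exact_mod_cast this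
      have h3 := Hanoi.Glp_norm_le q hptR ((8:ℝ)⁻¹ • Δ)
      have h4 : ∀ c : Fin 3, |((8:ℝ)⁻¹ • Δ) c| ≤ (8:ℝ)⁻¹ * ‖Δ‖ := by
        intro c
        rw [hsm c, abs_mul]
        have := Hanoi.coord_le_norm Δ c
        have h8 : |(8:ℝ)⁻¹| = (8:ℝ)⁻¹ := by norm_num
        rw [h8]
        nlinarith
      rw [hFdiff x y, ← hΔ]
      have := h4 0
      have := h4 1
      have := h4 2
      linarith [h4 0, h4 1, h4 2, h3]
    -- lower bound
    have hlow : ((hanoiGraph n).dist x y : ℝ) ≤ 480 * ‖F x - F y‖ := by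
      have h5 := Hanoi.Glp_coord q hpne ((8:ℝ)⁻¹ • Δ)
      have h6 := Hanoi.norm_le_sum_abs Δ
      have h7 : ∀ c : Fin 3, |((8:ℝ)⁻¹ • Δ) c| = (8:ℝ)⁻¹ * |Δ c| := by
        intro c
        rw [hsm c, abs_mul]
        norm_num
      obtain ⟨h51, h52, h53⟩ := h5
      rw [h7 0] at h51
      rw [h7 1] at h52
      rw [h7 2] at h53
      rw [hFdiff x y, ← hΔ]
      set N := ‖Hanoi.Glp q ((8:ℝ)⁻¹ • Δ)‖ with hN
      have h8 : ‖Δ‖ ≤ 24 * N := by linarith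
      linarith
    exact ⟨hd1', hup, hlow⟩
  -- positivity of the separation
  have hFpos : ∀ x y : List.Vector (Fin 3) n, x ≠ y → 0 < ‖F x - F y‖ := by
    intro x y hxy
    obtain ⟨hd1, _, hlow⟩ := hkey x y hxy
    nlinarith
  -- the three conditions
  have hinj : Function.Injective F := by
    intro x y hFxy
    by_contra hxy
    have := hFpos x y hxy
    rw [show F x - F y = 0 by rw [hFxy]; abel] at this
    simp at this
  have hlip : ∀ x y : List.Vector (Fin 3) n,
      ‖F x - F y‖ ≤ ((hanoiGraph n).dist x y : ℝ) := by
    intro x y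
    by_cases hxy : x = y
    · subst hxy
      simp
    · exact (hkey x y hxy).2.1
  -- conclude
  rw [lpDistortion]
  have hmem : sSup {r : ℝ | ∃ x y : List.Vector (Fin 3) n, x ≠ y ∧
      r = ((hanoiGraph n).dist x y : ℝ) / ‖F x - F y‖} ∈
      {L : ℝ | ∃ F' : List.Vector (Fin 3) n → lp (fun _ : ℕ => ℝ) q,
        Function.Injective F' ∧
        (∀ x y, ‖F' x - F' y‖ ≤ ((hanoiGraph n).dist x y : ℝ)) ∧
        L = sSup {r : ℝ | ∃ x y, x ≠ y ∧ r = ((hanoiGraph n).dist x y : ℝ) / ‖F' x - F' y‖}} :=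
    ⟨F, hinj, hlip, rfl⟩
  have hbdd : BddBelow {L : ℝ | ∃ F' : List.Vector (Fin 3) n → lp (fun _ : ℕ => ℝ) q,
      Function.Injective F' ∧
      (∀ x y, ‖F' x - F' y‖ ≤ ((hanoiGraph n).dist x y : ℝ)) ∧
      L = sSup {r : ℝ | ∃ x y, x ≠ y ∧ r = ((hanoiGraph n).dist x y : ℝ) / ‖F' x - F' y‖}} := by
    refine ⟨0, ?_⟩
    rintro L ⟨F', _, _, rfl⟩
    apply Real.sSup_nonneg
    rintro r ⟨x, y, _, rfl⟩
    positivity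
  have hsup_le : sSup {r : ℝ | ∃ x y : List.Vector (Fin 3) n, x ≠ y ∧
      r = ((hanoiGraph n).dist x y : ℝ) / ‖F x - F y‖} ≤ 480 := by
    apply Real.sSup_le
    · rintro r ⟨x, y, hxy, rfl⟩
      obtain ⟨hd1, hup, hlow⟩ := hkey x y hxy
      have hpos := hFpos x y hxy
      rw [div_le_iff₀ hpos]
      linarith
    · norm_num
  have := csInf_le hbdd hmem
  linarith
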